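/- Let R be a commutative ring and let S be either the polynomial ring R[X_1,…,X_l] or the formal power series ring R⟦X_1,…,X_l⟧. Let f_1,…,f_m, g_1,…,g_n ∈ S and suppose the ideals they generate coincide: I = (f_1,…,f_m) = (g_1,…,g_n). Then for every integer r, I_r((∂f_j/∂X_i)) + I = I_r((∂g_j/∂X_i)) + I, where (∂f_j/∂X_i) denotes the l×m Jacobian matrix of f_1,…,f_m and (∂g_j/∂X_i) the l×n Jacobian matrix of g_1,…,g_n. -/

import Mathlib

noncomputable section

/-- The ideal generated by the `r`-minors of a matrix, with the conventions
`I_r(A) = R` for `r ≤ 0` and `I_r(A) = 0` when `r` exceeds the size of `A`. -/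
def minorsIdeal {R : Type} [CommRing R] {m n : ℕ} (A : Matrix (Fin m) (Fin n) R)
    (r : ℤ) : Ideal R :=
  if r < 0 then ⊤
  else Ideal.span {x | ∃ (ri : Fin r.toNat → Fin m) (ci : Fin r.toNat → Fin n),
    x = (A.submatrix ri ci).det}

/-- The Jacobian matrix `(∂f_j/∂X_i)` of a family of polynomials. -/
def polyJacobi {k : Type} [CommRing k] {m r : ℕ}
    (f : Fin r → MvPolynomial (Fin m) k) :
    Matrix (Fin m) (Fin r) (MvPolynomial (Fin m) k) :=
  Matrix.of fun i j => MvPolynomial.pderiv i (f j)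

/-- Formal partial derivative `∂f/∂X_i` of a multivariate power series. -/
def psPderiv {k : Type} [CommRing k] {m : ℕ} (i : Fin m)
    (f : MvPowerSeries (Fin m) k) : MvPowerSeries (Fin m) k :=
  fun e => (e i + 1 : ℕ) • MvPowerSeries.coeff (R := k) (e + Finsupp.single i 1) f

/-- The Jacobian matrix `(∂f_j/∂X_i)` of a family of power series. -/
def psJacobi {k : Type} [CommRing k] {m r : ℕ}
    (f : Fin r → MvPowerSeries (Fin m) k) :
    Matrix (Fin m) (Fin r) (MvPowerSeries (Fin m) k) :=
  Matrix.of fun i j => psPderiv i (f j)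

lemma minorsIdeal_map {R S : Type} [CommRing R] [CommRing S] (φ : R →+* S)
    (hφ : Function.Surjective φ) {m n : ℕ} (A : Matrix (Fin m) (Fin n) R) (r : ℤ) :
    Ideal.map φ (minorsIdeal A r) = minorsIdeal (A.map φ) r := by
  unfold minorsIdeal
  split
  · exact Ideal.map_top φ
  · rw [Ideal.map_span]
    congr 1
    ext y
    constructor
    · rintro ⟨x, ⟨ri, ci, rfl⟩, rfl⟩
      exact ⟨ri, ci, by simp [RingHom.map_det, Matrix.submatrix_map]⟩
    · rintro ⟨ri, ci, rfl⟩
      exact ⟨(A.submatrix ri ci).det, ⟨ri, ci, rfl⟩,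
        by simp [RingHom.map_det, Matrix.submatrix_map]⟩


lemma minorsIdeal_mul_le {S : Type} [CommRing S] {l m n : ℕ}
    (A : Matrix (Fin l) (Fin m) S) (B : Matrix (Fin m) (Fin n) S) (r : ℤ) :
    minorsIdeal (A * B) r ≤ minorsIdeal A r := by
  unfold minorsIdeal
  split
  · exact le_rfl
  · rw [Ideal.span_le]
    rintro x ⟨ri, ci, rfl⟩
    rw [← Matrix.det_transpose]
    have hrow : (Matrix.transpose ((A * B).submatrix ri ci)) =
        (fun p => ∑ k : Fin m, B k (ci p) • fun q => A (ri q) k) := by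
      funext p q
      simp [Matrix.mul_apply, Matrix.transpose_apply, Finset.sum_apply, mul_comm]
    have expand : (Matrix.detRowAlternating (R := S) (n := Fin r.toNat)).toMultilinearMap
        (fun p => ∑ k : Fin m, B k (ci p) • fun q => A (ri q) k)
        = ∑ u : Fin r.toNat → Fin m,
          (∏ p, B (u p) (ci p)) • (Matrix.detRowAlternating (R := S)
            (n := Fin r.toNat)).toMultilinearMap (fun p => fun q => A (ri q) (u p)) := by
      rw [MultilinearMap.map_sum]
      exact Finset.sum_congr rfl fun u _ => MultilinearMap.map_smul_univ _ _ _
    show (Matrix.detRowAlternating (R := S) (n := Fin r.toNat)).toMultilinearMap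
        (Matrix.transpose ((A * B).submatrix ri ci)) ∈ _
    rw [hrow, expand]
    apply Ideal.sum_mem
    intro u _
    apply Submodule.smul_mem
    apply Ideal.subset_span
    refine ⟨ri, u, ?_⟩
    rw [show (Matrix.detRowAlternating (R := S) (n := Fin r.toNat)).toMultilinearMap
        (fun p => fun q => A (ri q) (u p)) = (Matrix.transpose (A.submatrix ri u)).det from rfl,
      Matrix.det_transpose]

open Finsupp Finset MvPowerSeries in
lemma sum_antidiagonal_shift {k : Type} [CommRing k] {m : ℕ} (i : Fin m)
    (e : Fin m →₀ ℕ) (F : (Fin m →₀ ℕ) → (Fin m →₀ ℕ) → k) :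
    ∑ p ∈ antidiagonal (e + single i 1), ((p.2 : Fin m →₀ ℕ) i) • F p.1 p.2 =
      ∑ p ∈ antidiagonal e, (((p.2 : Fin m →₀ ℕ)) i + 1) • F p.1 (p.2 + single i 1) := by
  rw [← Finset.sum_filter_of_ne (p := fun p => p.2 i ≠ 0)
    (by intro x _ hx h0; simp [h0] at hx)]
  refine Finset.sum_bij' (fun p _ => (p.1, p.2 - single i 1))
    (fun p _ => (p.1, p.2 + single i 1)) ?_ ?_ ?_ ?_ ?_
  · rintro ⟨a, b⟩ hab
    simp only [mem_filter, Finset.HasAntidiagonal.mem_antidiagonal] at hab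
    simp only [Finset.HasAntidiagonal.mem_antidiagonal]
    ext j
    have := DFunLike.congr_fun hab.1 j
    have hb : b i ≠ 0 := hab.2
    simp only [Finsupp.add_apply, single_apply] at this ⊢
    simp only [tsub_apply, single_apply]
    rcases eq_or_ne i j with rfl | hij
    · simp at this ⊢; omega
    · simp [hij] at this ⊢; omega
  · rintro ⟨a, b⟩ hab
    simp only [Finset.HasAntidiagonal.mem_antidiagonal] at hab
    simp only [mem_filter, Finset.HasAntidiagonal.mem_antidiagonal]
    constructor
    · ext j
      have := DFunLike.congr_fun hab j
      simp only [Finsupp.add_apply, single_apply] at this ⊢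
      rcases eq_or_ne i j with rfl | hij
      · simp at this ⊢; omega
      · simp [hij] at this ⊢; omega
    · simp
  · rintro ⟨a, b⟩ hab
    simp only [mem_filter, Finset.HasAntidiagonal.mem_antidiagonal] at hab
    have hb : b i ≠ 0 := hab.2
    simp only [Prod.mk.injEq, true_and]
    ext j
    simp only [Finsupp.add_apply, tsub_apply, single_apply]
    rcases eq_or_ne i j with rfl | hij
    · simp; omega
    · simp [hij]
  · rintro ⟨a, b⟩ hab
    simp only [Prod.mk.injEq, true_and]
    ext j
    simp only [Finsupp.add_apply, tsub_apply, single_apply]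
    rcases eq_or_ne i j with rfl | hij
    · simp
    · simp [hij]
  · rintro ⟨a, b⟩ hab
    simp only [mem_filter, Finset.HasAntidiagonal.mem_antidiagonal] at hab
    have hb : b i ≠ 0 := hab.2
    have h1 : ((b - single i 1 : Fin m →₀ ℕ)) i + 1 = b i := by
      simp only [tsub_apply, single_apply]; simp; omega
    have h2 : b - single i 1 + single i 1 = b := by
      ext j
      simp only [Finsupp.add_apply, tsub_apply, single_apply]
      rcases eq_or_ne i j with rfl | hij
      · simp; omega
      · simp [hij]
    rw [h1, h2]

lemma coeff_psPderiv {k : Type} [CommRing k] {m : ℕ} (i : Fin m)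
    (f : MvPowerSeries (Fin m) k) (e : Fin m →₀ ℕ) :
    MvPowerSeries.coeff (R := k) e (psPderiv i f) =
      (e i + 1 : ℕ) • MvPowerSeries.coeff (R := k) (e + Finsupp.single i 1) f := rfl


lemma psPderiv_add {k : Type} [CommRing k] {m : ℕ} (i : Fin m)
    (f g : MvPowerSeries (Fin m) k) :
    psPderiv i (f + g) = psPderiv i f + psPderiv i g := by
  funext e
  show (e i + 1 : ℕ) • MvPowerSeries.coeff (R := k) _ (f + g) = _
  rw [map_add, smul_add]
  rfl


lemma psPderiv_mul {k : Type} [CommRing k] {m : ℕ} (i : Fin m)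
    (f g : MvPowerSeries (Fin m) k) :
    psPderiv i (f * g) = f * psPderiv i g + g * psPderiv i f := by
  apply MvPowerSeries.ext; intro e
  rw [map_add, coeff_psPderiv, MvPowerSeries.coeff_mul, Finset.smul_sum]
  have step1 : ∀ p ∈ Finset.HasAntidiagonal.antidiagonal (e + Finsupp.single i 1),
      (e i + 1 : ℕ) • (MvPowerSeries.coeff (R := k) p.1 f * MvPowerSeries.coeff (R := k) p.2 g) =
      ((p.1 : Fin m →₀ ℕ) i) • (MvPowerSeries.coeff (R := k) p.1 f * MvPowerSeries.coeff (R := k) p.2 g)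
        + ((p.2 : Fin m →₀ ℕ) i) • (MvPowerSeries.coeff (R := k) p.1 f * MvPowerSeries.coeff (R := k) p.2 g) := by
    rintro ⟨a, b⟩ hab
    rw [Finset.HasAntidiagonal.mem_antidiagonal] at hab
    have := DFunLike.congr_fun hab i
    simp only [Finsupp.add_apply, Finsupp.single_apply, if_pos rfl] at this
    rw [← add_smul]
    congr 1
    dsimp only
    simp only [eq_self_iff_true, if_true] at this
    omega
  rw [Finset.sum_congr rfl step1, Finset.sum_add_distrib, add_comm
    (MvPowerSeries.coeff (R := k) e (f * psPderiv i g)) (MvPowerSeries.coeff (R := k) e (g * psPderiv i f)),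
    MvPowerSeries.coeff_mul, MvPowerSeries.coeff_mul]
  congr 1
  · rw [Finsupp.sum_antidiagonal_swap (e + Finsupp.single i 1) (fun a b =>
      ((a : Fin m →₀ ℕ) i) • (MvPowerSeries.coeff (R := k) a f * MvPowerSeries.coeff (R := k) b g)),
      sum_antidiagonal_shift i e
      (fun a b => MvPowerSeries.coeff (R := k) b f * MvPowerSeries.coeff (R := k) a g)]
    apply Finset.sum_congr rfl
    rintro ⟨a, b⟩ _
    rw [coeff_psPderiv, mul_smul_comm, mul_comm]
  · rw [sum_antidiagonal_shift i e
      (fun a b => MvPowerSeries.coeff (R := k) a f * MvPowerSeries.coeff (R := k) b g)]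
    apply Finset.sum_congr rfl
    rintro ⟨a, b⟩ _
    rw [coeff_psPderiv, mul_smul_comm]

lemma key_le {S : Type} [CommRing S] {l m n : ℕ} (D : Fin l → S → S)
    (hadd : ∀ i x y, D i (x + y) = D i x + D i y)
    (hmul : ∀ i x y, D i (x * y) = x * D i y + y * D i x)
    (f : Fin m → S) (g : Fin n → S)
    (hle : Ideal.span (Set.range g) ≤ Ideal.span (Set.range f)) (r : ℤ) :
    minorsIdeal (Matrix.of fun i j => D i (g j)) r ⊔ Ideal.span (Set.range f)
      ≤ minorsIdeal (Matrix.of fun i j => D i (f j)) r ⊔ Ideal.span (Set.range f) := by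
  set I := Ideal.span (Set.range f) with hI
  let mk : S →+* S ⧸ I := Ideal.Quotient.mk I
  have hmk : Function.Surjective mk := Ideal.Quotient.mk_surjective
  have key : ∀ {p : ℕ} (A : Matrix (Fin l) (Fin p) S),
      Ideal.comap mk (minorsIdeal (A.map mk) r) = minorsIdeal A r ⊔ I := by
    intro p A
    rw [← minorsIdeal_map mk hmk, Ideal.comap_map_of_surjective mk hmk,
      ← RingHom.ker_eq_comap_bot, Ideal.mk_ker]
  have hg : ∀ j, ∃ c : Fin m → S, ∑ k, c k * f k = g j := fun j =>
    Ideal.mem_span_range_iff_exists_fun.mp (hle (Ideal.subset_span ⟨j, rfl⟩))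
  choose c hc using hg
  have hmat : (Matrix.of fun i j => D i (g j)).map mk =
      (Matrix.of fun i j => D i (f j)).map mk * Matrix.of (fun k j => mk (c j k)) := by
    ext i j
    simp only [Matrix.map_apply, Matrix.of_apply, Matrix.mul_apply]
    rw [← hc j]
    have hsum : D i (∑ k, c j k * f k) = ∑ k, D i (c j k * f k) :=
      map_sum (AddMonoidHom.mk' (D i) (hadd i)) _ _
    rw [hsum, map_sum]
    refine Finset.sum_congr rfl fun k _ => ?_
    rw [hmul i, map_add, map_mul, map_mul,
      Ideal.Quotient.eq_zero_iff_mem.mpr (Ideal.subset_span ⟨k, rfl⟩ : f k ∈ I)]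
    ring
  calc minorsIdeal (Matrix.of fun i j => D i (g j)) r ⊔ I
      = Ideal.comap mk (minorsIdeal ((Matrix.of fun i j => D i (g j)).map mk) r) :=
        (key _).symm
    _ ≤ Ideal.comap mk (minorsIdeal ((Matrix.of fun i j => D i (f j)).map mk) r) := by
        rw [hmat]
        exact Ideal.comap_mono (minorsIdeal_mul_le _ _ r)
    _ = minorsIdeal (Matrix.of fun i j => D i (f j)) r ⊔ I := key _


/-- Let `R` be a commutative ring and `S` either the polynomial ring `R[X_1,…,X_l]` or
the power series ring `R⟦X_1,…,X_l⟧`. If `f_1,…,f_m, g_1,…,g_n ∈ S` generate the same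
ideal `I`, then `I_r((∂f_j/∂X_i)) + I = I_r((∂g_j/∂X_i)) + I` for every integer `r`. -/
theorem minorsIdeal_jacobi_sup_span_eq_of_span_eq
    (R : Type) [CommRing R] (l : ℕ) (r : ℤ) :
    (∀ (m n : ℕ) (f : Fin m → MvPolynomial (Fin l) R)
      (g : Fin n → MvPolynomial (Fin l) R),
      Ideal.span (Set.range f) = Ideal.span (Set.range g) →
      minorsIdeal (polyJacobi f) r ⊔ Ideal.span (Set.range f) =
        minorsIdeal (polyJacobi g) r ⊔ Ideal.span (Set.range f)) ∧
    (∀ (m n : ℕ) (f : Fin m → MvPowerSeries (Fin l) R)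
      (g : Fin n → MvPowerSeries (Fin l) R),
      Ideal.span (Set.range f) = Ideal.span (Set.range g) →
      minorsIdeal (psJacobi f) r ⊔ Ideal.span (Set.range f) =
        minorsIdeal (psJacobi g) r ⊔ Ideal.span (Set.range f)) := by
  constructor
  · intro m n f g h
    have hadd : ∀ (i : Fin l) (x y : MvPolynomial (Fin l) R),
        MvPolynomial.pderiv i (x + y) = MvPolynomial.pderiv i x + MvPolynomial.pderiv i y :=
      fun i x y => map_add _ _ _
    have hmul : ∀ (i : Fin l) (x y : MvPolynomial (Fin l) R),
        MvPolynomial.pderiv i (x * y)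
          = x * MvPolynomial.pderiv i y + y * MvPolynomial.pderiv i x := by
      intro i x y
      rw [MvPolynomial.pderiv_mul]
      ring
    refine le_antisymm ?_ (key_le _ hadd hmul f g h.ge r)
    rw [h]
    exact key_le _ hadd hmul g f h.le r
  · intro m n f g h
    have hadd : ∀ (i : Fin l) (x y : MvPowerSeries (Fin l) R),
        psPderiv i (x + y) = psPderiv i x + psPderiv i y := psPderiv_add
    have hmul := psPderiv_mul (k := R) (m := l)
    refine le_antisymm ?_ (key_le _ hadd hmul f g h.ge r)
    rw [h]
    exact key_le _ hadd hmul g f h.le r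

end
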